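/- If a Banach space X is reflexive, then for every ε > 0 and every sequence (xᵢ)_{i≥1} in the closed unit ball of X there exist k, r ∈ ℕ and convex coefficients a₁,…,a_k ≥ 0 with Σaᵢ = 1 and b₁,…,b_r ≥ 0 with Σbⱼ = 1 such that ‖Σ_{i=1}^k aᵢ xᵢ − Σ_{j=1}^r bⱼ x_{k+j}‖ < ε. -/

import Mathlib

/-- A Banach space is reflexive if the canonical inclusion into its double dual is onto. -/
def IsReflexiveSpace (X : Type*) [NormedAddCommGroup X] [NormedSpace ℝ X] : Prop :=
  Function.Surjective (NormedSpace.inclusionInDoubleDual ℝ X)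

open NormedSpace Filter Set

/-- Extract `Fin`-indexed convex coefficients from membership in the convex hull of a tail. -/
lemma convexHull_tail_rep {X : Type*} [NormedAddCommGroup X] [NormedSpace ℝ X]
    (x : ℕ → X) (n : ℕ) {y : X} (hy : y ∈ convexHull ℝ (x '' Set.Ici n)) :
    ∃ (N : ℕ) (w : Fin N → ℝ), (∀ j, 0 ≤ w j) ∧ (∑ j, w j) = 1 ∧
      (∑ j : Fin N, w j • x (n + j)) = y := by
  rw [convexHull_eq] at hy
  obtain ⟨ι, t, w, z, hw0, hw1, hz, hy⟩ := hy
  rw [t.centerMass_eq_of_sum_1 _ hw1] at hy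
  -- choose indices m i with m i ≥ n and x (m i) = z i, for i ∈ t
  have hm : ∀ i ∈ t, ∃ m : ℕ, n ≤ m ∧ x m = z i := by
    intro i hi
    obtain ⟨m, hm, hmx⟩ := hz i hi
    exact ⟨m, hm, hmx⟩
  classical
  choose! m hm1 hm2 using hm
  set N : ℕ := (t.sup fun i => m i - n) + 1 with hN
  have hmN : ∀ i ∈ t, m i - n < N := by
    intro i hi
    exact Nat.lt_succ_of_le (Finset.le_sup (f := fun i => m i - n) hi)
  have hmaps : ∀ i ∈ t, m i - n ∈ Finset.range N := fun i hi => Finset.mem_range.mpr (hmN i hi)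
  refine ⟨N, fun j => ∑ i ∈ t.filter (fun i => m i - n = (j : ℕ)), w i, ?_, ?_, ?_⟩
  · intro j
    exact Finset.sum_nonneg fun i hi => hw0 i (Finset.mem_filter.mp hi).1
  · rw [Fin.sum_univ_eq_sum_range (fun j => ∑ i ∈ t.filter (fun i => m i - n = j), w i) N,
      Finset.sum_fiberwise_of_maps_to hmaps, hw1]
  · rw [Fin.sum_univ_eq_sum_range
      (fun j => (∑ i ∈ t.filter (fun i => m i - n = j), w i) • x (n + j)) N, ← hy]
    rw [← Finset.sum_fiberwise_of_maps_to hmaps (fun i => w i • z i)]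
    refine Finset.sum_congr rfl fun j hj => ?_
    rw [Finset.sum_smul]
    refine Finset.sum_congr rfl fun i hi => ?_
    obtain ⟨hit, hij⟩ := Finset.mem_filter.mp hi
    have hni : n ≤ m i := hm1 i hit
    have hnm : n + j = m i := by omega
    rw [hnm, hm2 i hit]

/-- In a reflexive space, a bounded sequence has a point lying in the closed convex hull
of every tail. -/
lemma exists_mem_closure_convexHull_tail {X : Type*} [NormedAddCommGroup X] [NormedSpace ℝ X]
    (hrefl : IsReflexiveSpace X) (x : ℕ → X) (hx : ∀ i, ‖x i‖ ≤ 1) :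
    ∃ z : X, ∀ n : ℕ, z ∈ closure (convexHull ℝ (x '' Set.Ici n)) := by
  set u : ℕ → WeakDual ℝ (StrongDual ℝ X) := fun i => inclusionInDoubleDual ℝ X (x i) with hu
  have hK : IsCompact (WeakDual.toStrongDual ⁻¹' Metric.closedBall (0 : StrongDual ℝ (StrongDual ℝ X)) 1) :=
    WeakDual.isCompact_closedBall (𝕜 := ℝ) (E := StrongDual ℝ X) 0 1
  have hmem : ∀ i, u i ∈ WeakDual.toStrongDual ⁻¹' Metric.closedBall (0 : StrongDual ℝ (StrongDual ℝ X)) 1 := by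
    intro i
    simp only [Set.mem_preimage, Metric.mem_closedBall, dist_zero_right]
    exact le_trans ((dist_zero_right (inclusionInDoubleDual ℝ X (x i))).trans_le (double_dual_bound ℝ X (x i))) (hx i)
  have hle : Filter.map u atTop ≤ Filter.principal
      (WeakDual.toStrongDual ⁻¹' Metric.closedBall (0 : StrongDual ℝ (StrongDual ℝ X)) 1) := by
    rw [Filter.le_principal_iff, Filter.mem_map]
    exact Filter.univ_mem' fun i => hmem i
  obtain ⟨F, -, hF⟩ := hK.exists_clusterPt hle
  obtain ⟨z, hz⟩ := hrefl (WeakDual.toStrongDual F)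
  refine ⟨z, fun n => ?_⟩
  by_contra hzc
  obtain ⟨f, c, hfs, hfz⟩ := geometric_hahn_banach_closed_point
    ((convex_convexHull ℝ _).closure) isClosed_closure hzc
  have hUopen : IsOpen {G : WeakDual ℝ (StrongDual ℝ X) | c < G f} :=
    isOpen_Ioi.preimage (WeakDual.eval_continuous (𝕜 := ℝ) f)
  have hFU : F ∈ {G : WeakDual ℝ (StrongDual ℝ X) | c < G f} := by
    have hFf : F f = f z := by
      rw [show F f = (WeakDual.toStrongDual F) f from rfl, ← hz, dual_def]
    simpa [Set.mem_setOf_eq, hFf] using hfz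
  have hV : u '' Set.Ici n ∈ Filter.map u atTop := by
    rw [Filter.mem_map]
    exact Filter.mem_of_superset (Filter.Ici_mem_atTop n)
      (fun i hi => Set.mem_image_of_mem u hi)
  obtain ⟨G, hGU, hGV⟩ := (clusterPt_iff_nonempty.mp hF (hUopen.mem_nhds hFU) hV)
  obtain ⟨i, hi, rfl⟩ := hGV
  have hxi : x i ∈ closure (convexHull ℝ (x '' Set.Ici n)) :=
    subset_closure (subset_convexHull ℝ _ (Set.mem_image_of_mem x hi))
  have h1 : f (x i) < c := hfs _ hxi
  have h2 : c < f (x i) := hGU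
  exact absurd h1 (not_lt.mpr h2.le)

theorem reflexive_convex_combinations_close
    (X : Type*) [NormedAddCommGroup X] [NormedSpace ℝ X] [CompleteSpace X]
    (hrefl : IsReflexiveSpace X) :
    ∀ ε : ℝ, 0 < ε → ∀ x : ℕ → X, (∀ i, ‖x i‖ ≤ 1) →
      ∃ (k r : ℕ) (a : Fin k → ℝ) (b : Fin r → ℝ),
        (∀ i, 0 ≤ a i) ∧ (∑ i, a i) = 1 ∧
        (∀ j, 0 ≤ b j) ∧ (∑ j, b j) = 1 ∧
        ‖(∑ i : Fin k, a i • x i) - ∑ j : Fin r, b j • x (k + j)‖ < ε := by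
  intro ε hε x hx
  obtain ⟨z, hz⟩ := exists_mem_closure_convexHull_tail hrefl x hx
  obtain ⟨y₁, hy₁m, hy₁d⟩ := Metric.mem_closure_iff.mp (hz 0) (ε / 2) (by linarith)
  obtain ⟨k, a, ha0, ha1, hae⟩ := convexHull_tail_rep x 0 hy₁m
  obtain ⟨y₂, hy₂m, hy₂d⟩ := Metric.mem_closure_iff.mp (hz k) (ε / 2) (by linarith)
  obtain ⟨r, b, hb0, hb1, hbe⟩ := convexHull_tail_rep x k hy₂m
  refine ⟨k, r, a, b, ha0, ha1, hb0, hb1, ?_⟩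
  have hae' : (∑ i : Fin k, a i • x i) = y₁ := by
    rw [← hae]; exact Finset.sum_congr rfl fun i _ => by rw [Nat.zero_add]
  rw [hae', hbe]
  calc ‖y₁ - y₂‖ ≤ ‖y₁ - z‖ + ‖z - y₂‖ := norm_sub_le_norm_sub_add_norm_sub y₁ z y₂
    _ < ε / 2 + ε / 2 := by
        rw [← dist_eq_norm, ← dist_eq_norm]
        exact add_lt_add (dist_comm z y₁ ▸ hy₁d) hy₂d
    _ = ε := by ring
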